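/- Let p > 4 be prime. Then the minimal sensitivity of the simplified weighted sum function on p variables equals 1: every input has sensitivity at least 1, and the input with x_0 = 1 and all other coordinates 0 has sensitivity exactly 1. -/

import Mathlib

open Finset

/-- the weighted sum `s(X) = (∑ k, k·x_k) mod n`, as an element of `ZMod n`. -/
def wsS {n : ℕ} [NeZero n] (X : ZMod n → Bool) : ZMod n :=
  ∑ i : ZMod n, if X i then i else 0

/-- the simplified weighted sum function `f(X) = x_{s(X)}`. -/
def wsF {n : ℕ} [NeZero n] (X : ZMod n → Bool) : Bool := X (wsS X)

/-- the sensitivity `Sen(f, X)`: the number of coordinates whose flip changes `f`. -/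
def wsSens {n : ℕ} [NeZero n] (X : ZMod n → Bool) : ℕ :=
  (Finset.univ.filter fun i : ZMod n =>
    wsF (Function.update X i (!X i)) ≠ wsF X).card

lemma wsS_update {p : ℕ} [NeZero p] (X : ZMod p → Bool) (i : ZMod p) (b : Bool) :
    wsS (Function.update X i b) = wsS X - (if X i then i else 0) + (if b then i else 0) := by
  have h1 : ∀ Y : ZMod p → Bool, wsS Y
      = (if Y i then i else 0) + ∑ j ∈ univ.erase i, (if Y j then j else 0) :=
    fun Y => (Finset.add_sum_erase _ _ (mem_univ i)).symm
  rw [h1, h1 X]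
  have h2 : ∑ j ∈ univ.erase i, (if Function.update X i b j then (j:ZMod p) else 0)
      = ∑ j ∈ univ.erase i, (if X j then j else 0) :=
    Finset.sum_congr rfl (fun j hj => by rw [Function.update_of_ne (Finset.ne_of_mem_erase hj)])
  rw [h2, Function.update_self]
  ring

lemma wsS_upd_on {p : ℕ} [NeZero p] (X : ZMod p → Bool) (i : ZMod p) (hi : X i = false) :
    wsS (Function.update X i (!X i)) = wsS X + i := by
  rw [wsS_update, hi]; simp

lemma wsS_upd_off {p : ℕ} [NeZero p] (X : ZMod p → Bool) (i : ZMod p) (hi : X i = true) :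
    wsS (Function.update X i (!X i)) = wsS X - i := by
  rw [wsS_update, hi]; simp

lemma exists_sens (p : ℕ) (hp : p.Prime) (hp4 : 4 < p) [NeZero p] (X : ZMod p → Bool) :
    ∃ i : ZMod p, wsF (Function.update X i (!X i)) ≠ wsF X := by
  haveI : Fact p.Prime := ⟨hp⟩
  have h2 : (2 : ZMod p) ≠ 0 := by
    intro h
    have h2' : ((2:ℕ) : ZMod p) = 0 := by push_cast; exact h
    rw [ZMod.natCast_eq_zero_iff] at h2'
    have := Nat.le_of_dvd (by norm_num) h2'
    omega
  set s := wsS X with hs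
  by_cases hs0 : s = 0
  · refine ⟨0, ?_⟩
    have hY : wsS (Function.update X 0 (!X 0)) = 0 := by
      rw [wsS_update, ← hs, hs0]; simp
    rw [wsF, wsF, hY, ← hs, hs0, Function.update_self]
    simp
  · by_cases hXs : X s = true
    · by_cases hhalf : X (s/2) = true
      · refine ⟨s/2, ?_⟩
        have hdd : s / 2 + s / 2 = s := by field_simp; ring
        have hY : wsS (Function.update X (s/2) (!X (s/2))) = s/2 := by
          rw [wsS_upd_off X _ hhalf, ← hs]
          linear_combination -hdd
        rw [wsF, wsF, hY, Function.update_self, ← hs, hXs, hhalf]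
        simp
      · -- hard case
        by_contra hcon
        push_neg at hcon
        have hfX : wsF X = true := by rw [wsF, ← hs]; exact hXs
        have hA : ∀ i, X i = false → X (s + i) = true := by
          intro i hi
          have hc := hcon i
          rw [hfX, wsF, wsS_upd_on X i hi, ← hs] at hc
          have hne : s + i ≠ i := fun h => hs0 (by linear_combination h)
          rwa [Function.update_of_ne hne] at hc
        have hB : ∀ i, X i = true → X (s - i) = true := by
          intro i hi
          have hc := hcon i
          rw [hfX, wsF, wsS_upd_off X i hi, ← hs] at hc
          have hne : s - i ≠ i := by
            intro h
            apply hhalf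
            have hi2 : i = s / 2 := by field_simp; linear_combination -h
            rwa [← hi2]
          rwa [Function.update_of_ne hne] at hc
        set T := univ.filter (fun i : ZMod p => X i = true) with hT
        have hsum : ∑ i ∈ T, i = s := by
          rw [hT, Finset.sum_filter]; exact hs.symm
        have hinv : ∀ i ∈ T, s - i ∈ T := by
          intro i hi
          rw [hT, mem_filter] at hi ⊢
          exact ⟨mem_univ _, hB i hi.2⟩
        have hsum2 : ∑ i ∈ T, (s - i) = ∑ i ∈ T, i := by
          apply Finset.sum_nbij' (fun i => s - i) (fun i => s - i)
          · exact hinv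
          · exact hinv
          · intro a _; ring
          · intro a _; ring
          · intro a _; rfl
        have hcard2 : (T.card : ZMod p) = 2 := by
          have h1 : (T.card : ZMod p) * s = 2 * s := by
            rw [Finset.sum_sub_distrib, Finset.sum_const, hsum, nsmul_eq_mul] at hsum2
            linear_combination hsum2
          exact mul_right_cancel₀ hs0 h1
        have hFT : (univ.filter (fun i : ZMod p => X i = false)).card ≤ T.card := by
          apply Finset.card_le_card_of_injOn (fun i => s + i)
          · intro i hi
            rw [Finset.mem_coe, mem_filter] at hi
            rw [Finset.mem_coe, hT, mem_filter]
            exact ⟨mem_univ _, hA i hi.2⟩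
          · intro a _ b _ h
            exact add_left_cancel h
        have hsplit : (univ.filter (fun i : ZMod p => X i = false)).card + T.card = p := by
          have heq : (univ.filter (fun i : ZMod p => X i = false))
              = univ.filter (fun i : ZMod p => ¬ (X i = true)) := by
            apply Finset.filter_congr; intro i _; simp
          have hkey := Finset.card_filter_add_card_filter_not
            (s := (univ : Finset (ZMod p))) (p := fun i : ZMod p => X i = true)
          rw [Finset.card_univ, ZMod.card] at hkey
          rw [← heq, ← hT] at hkey
          omega
        have hTlt : T.card < p := by
          rcases lt_or_ge T.card p with h | h
          · exact h
          · exfalso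
            have : T = univ := Finset.eq_univ_of_card T
              (by rw [ZMod.card]; omega)
            apply hhalf
            have hm : s / 2 ∈ T := this ▸ mem_univ _
            rw [hT, mem_filter] at hm
            exact hm.2
        have hmod : T.card % p = 2 % p := by
          have hcast : ((T.card : ℕ) : ZMod p) = ((2 : ℕ) : ZMod p) := by
            rw [hcard2]; norm_num
          rwa [ZMod.natCast_eq_natCast_iff'] at hcast
        rw [Nat.mod_eq_of_lt hTlt, Nat.mod_eq_of_lt (by omega : 2 < p)] at hmod
        omega
    · -- X s = false
      by_contra hcon
      push_neg at hcon
      have hXs' : X s = false := by simpa using hXs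
      have hfX : wsF X = false := by rw [wsF, ← hs]; exact hXs'
      have hA : ∀ i, X i = false → X (s + i) = false := by
        intro i hi
        have hc := hcon i
        rw [hfX, wsF, wsS_upd_on X i hi, ← hs] at hc
        have hne : s + i ≠ i := fun h => hs0 (by linear_combination h)
        rwa [Function.update_of_ne hne] at hc
      have hall : ∀ n : ℕ, X (((n : ZMod p) + 1) * s) = false := by
        intro n
        induction n with
        | zero => simpa using hXs'
        | succ m ih =>
          have hstep := hA _ ih
          have he : s + ((m : ZMod p) + 1) * s = ((↑(m+1) : ZMod p) + 1) * s := by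
            push_cast; ring
          rwa [he] at hstep
      have hallf : ∀ j : ZMod p, X j = false := by
        intro j
        have hj := hall (j * s⁻¹ - 1).val
        rwa [ZMod.natCast_val, ZMod.cast_id, sub_add_cancel, mul_assoc,
          inv_mul_cancel₀ hs0, mul_one] at hj
      have hzero : wsS X = 0 := by
        rw [wsS]
        apply Finset.sum_eq_zero
        intro i _
        rw [hallf i]
        simp
      exact hs0 (hs.trans hzero)

theorem stmt_9 (p : ℕ) (hp : p.Prime) (hp4 : 4 < p) [NeZero p] :
    (∀ X : ZMod p → Bool, 1 ≤ wsSens X) ∧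
      wsSens (fun i : ZMod p => decide (i = 0)) = 1 := by
  constructor
  · intro X
    obtain ⟨i, hi⟩ := exists_sens p hp hp4 X
    exact Finset.card_pos.mpr ⟨i, Finset.mem_filter.mpr ⟨mem_univ _, hi⟩⟩
  · set X : ZMod p → Bool := fun i : ZMod p => decide (i = 0) with hX
    have hs : wsS X = 0 := by
      rw [wsS]
      apply Finset.sum_eq_zero
      intro i _
      by_cases h : i = 0
      · subst h; simp
      · simp [hX, h]
    have hX0 : X 0 = true := by simp [hX]
    have hfX : wsF X = true := by rw [wsF, hs]; exact hX0
    rw [wsSens]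
    have hset : (univ.filter fun i : ZMod p =>
        wsF (Function.update X i (!X i)) ≠ wsF X) = {0} := by
      ext i
      simp only [mem_filter, mem_univ, true_and, Finset.mem_singleton]
      constructor
      · intro h
        by_contra hi
        apply h
        have hXi : X i = false := by simp [hX, hi]
        have h1 : wsS (Function.update X i (!X i)) = i := by
          rw [wsS_upd_on X i hXi, hs, zero_add]
        rw [hfX, wsF, h1, Function.update_self, hXi]
        rfl
      · intro h
        subst h
        have h1 : wsS (Function.update X 0 (!X 0)) = 0 := by
          rw [wsS_upd_off X 0 hX0, hs]; ring
        rw [hfX, wsF, h1, Function.update_self, hX0]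
        simp
    rw [hset, Finset.card_singleton]
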